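/- Let (N,B) be a symmetric Novikov algebra over ℂ that is non-commutative (there exist x,y ∈ N with xy ≠ yx) and reduced, i.e. N ≠ {0} and Ann(N) ⊆ N·N, where Ann(N) = {x ∈ N : xN = Nx = 0} and N·N is the linear span of all products. Then 3 ≤ dim(Ann(N)) ≤ dim(N·N) ≤ dim(N) − 3. -/

import Mathlib

section Aux

variable {N : Type*} [AddCommGroup N] [Module ℂ N] [FiniteDimensional ℂ N]

/-- If `c₁, c₂` are "independent" and `B` is nondegenerate, there is `u`
with `B c₁ u = 1` and `B c₂ u = 0`. -/
lemma aux_dual (B : N →ₗ[ℂ] N →ₗ[ℂ] ℂ)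
    (hBnondeg : ∀ x : N, (∀ y : N, B x y = 0) → x = 0)
    (c₁ c₂ : N) (hind : ∀ a b : ℂ, a • c₁ + b • c₂ = 0 → a = 0 ∧ b = 0) :
    ∃ u : N, B c₁ u = 1 ∧ B c₂ u = 0 := by
  have hc2 : ∃ u₀ : N, B c₂ u₀ ≠ 0 := by
    by_contra h
    push_neg at h
    have : c₂ = 0 := hBnondeg c₂ (by simpa using h)
    have := hind 0 1 (by simp [this])
    exact one_ne_zero this.2
  obtain ⟨u₀, hu₀⟩ := hc2
  have key : ∃ u : N, B c₂ u = 0 ∧ B c₁ u ≠ 0 := by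
    by_contra h
    push_neg at h
    set t : ℂ := B c₁ u₀ / B c₂ u₀ with ht
    have hall : ∀ x : N, B (c₁ - t • c₂) x = 0 := by
      intro x
      have hker : B c₂ (x - (B c₂ x / B c₂ u₀) • u₀) = 0 := by
        simp only [map_sub, map_smul, smul_eq_mul]
        field_simp
        ring
      have h1 : B c₁ (x - (B c₂ x / B c₂ u₀) • u₀) = 0 := h _ hker
      simp only [map_sub, map_smul, smul_eq_mul, sub_eq_zero] at h1
      simp only [map_sub, LinearMap.sub_apply, LinearMap.smul_apply, smul_eq_mul, ht]
      simp only [map_smul, LinearMap.smul_apply, smul_eq_mul]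
      rw [h1]
      field_simp
      ring
    have hz : c₁ - t • c₂ = 0 := hBnondeg _ hall
    have := hind 1 (-t) (by rw [one_smul, neg_smul, ← sub_eq_add_neg]; exact hz)
    exact one_ne_zero this.1
  obtain ⟨u, hu2, hu1⟩ := key
  refine ⟨(B c₁ u)⁻¹ • u, ?_, ?_⟩
  · simp [map_smul, smul_eq_mul, inv_mul_cancel₀ hu1]
  · simp [map_smul, hu2]

set_option maxHeartbeats 1000000 in
/-- If `β` is an alternating bilinear map which is "invariant" with respect to a nondegenerate
symmetric bilinear form `B`, and `β` is not identically zero, then the span of the values of `β`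
has dimension at least 3. -/
lemma aux_rank3 (β : N →ₗ[ℂ] N →ₗ[ℂ] N) (B : N →ₗ[ℂ] N →ₗ[ℂ] ℂ)
    (hBsymm : ∀ x y : N, B x y = B y x)
    (hBnondeg : ∀ x : N, (∀ y : N, B x y = 0) → x = 0)
    (halt : ∀ x : N, β x x = 0)
    (hinv : ∀ x y z : N, B (β x y) z = B x (β y z))
    (hne : ∃ x y : N, β x y ≠ 0) :
    3 ≤ Module.finrank ℂ (Submodule.span ℂ {a : N | ∃ x y : N, β x y = a}) := by
  classical
  set Csp : Submodule ℂ N := Submodule.span ℂ {a : N | ∃ x y : N, β x y = a} with hCsp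
  -- antisymmetry
  have hskew : ∀ x y : N, β y x = -β x y := by
    intro x y
    have h := halt (x + y)
    simp only [map_add, LinearMap.add_apply, halt] at h
    have h2 : β x y + β y x = 0 := by
      rw [← h]; abel
    exact eq_neg_of_add_eq_zero_left (by rw [← h2]; abel)
  -- elements orthogonal to Csp are "central"
  have hcent : ∀ x : N, (∀ c ∈ Csp, B x c = 0) → ∀ y : N, β x y = 0 := by
    intro x hx y
    apply hBnondeg
    intro u
    rw [hinv]
    exact hx _ (Submodule.subset_span ⟨y, u, rfl⟩)
  by_contra hlt
  push_neg at hlt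
  obtain ⟨x', y', hne'⟩ := hne
  have hCne : Module.finrank ℂ Csp ≠ 0 := by
    intro h0
    rw [Submodule.finrank_eq_zero] at h0
    have hmem : β x' y' ∈ Csp := Submodule.subset_span ⟨x', y', rfl⟩
    rw [h0, Submodule.mem_bot] at hmem
    exact hne' hmem
  have hcases : Module.finrank ℂ Csp = 1 ∨ Module.finrank ℂ Csp = 2 := by omega
  rcases hcases with hm | hm
  · -- dim Csp = 1 : show β ≡ 0, contradiction
    have b := Module.finBasisOfFinrankEq ℂ (↥Csp) hm
    set c : N := (b 0 : N) with hc
    have hcne : c ≠ 0 := fun h => b.ne_zero 0 (Subtype.ext h)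
    have hrep : ∀ v ∈ Csp, ∃ t : ℂ, v = t • c := by
      intro v hv
      have hs := b.sum_repr ⟨v, hv⟩
      refine ⟨b.repr ⟨v, hv⟩ 0, ?_⟩
      have h2 := congrArg (Submodule.subtype Csp) hs
      simp only [map_sum, map_smul, Fin.sum_univ_one] at h2
      exact h2.symm
    obtain ⟨u, hu1⟩ : ∃ u : N, B c u = 1 := by
      obtain ⟨u₀, hu₀⟩ : ∃ u₀ : N, B c u₀ ≠ 0 := by
        by_contra h; push_neg at h; exact hcne (hBnondeg c h)
      exact ⟨(B c u₀)⁻¹ • u₀, by simp [map_smul, smul_eq_mul, inv_mul_cancel₀ hu₀]⟩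
    -- the "central part" of any x
    have hdec : ∀ x y : N, β (x - (B c x) • u) y = 0 := by
      intro x
      apply hcent
      intro v hv
      obtain ⟨t, rfl⟩ := hrep v hv
      rw [hBsymm]
      simp only [map_smul, map_sub, LinearMap.smul_apply, LinearMap.sub_apply, smul_eq_mul]
      rw [hu1, hBsymm c x]
      ring
    apply hne'
    set a : ℂ := B c x' with ha
    set d : ℂ := B c y' with hd
    set x₀ : N := x' - a • u with hx0
    set y₀ : N := y' - d • u with hy0
    have hx : x' = x₀ + a • u := by rw [hx0]; abel
    have hy : y' = y₀ + d • u := by rw [hy0]; abel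
    have e1 : ∀ w : N, β x₀ w = 0 := hdec x'
    have e2 : ∀ w : N, β y₀ w = 0 := hdec y'
    have huy : β u y' = 0 := by
      rw [hy, map_add, map_smul]
      have h1 : β u y₀ = 0 := by rw [hskew y₀ u, e2, neg_zero]
      rw [h1, halt, smul_zero, add_zero]
    rw [hx]
    simp only [map_add, map_smul, LinearMap.add_apply, LinearMap.smul_apply]
    simp [e1 y', huy]
  · -- dim Csp = 2 : show all values of β are multiples of one vector, contradiction
    have b := Module.finBasisOfFinrankEq ℂ (↥Csp) hm
    set c₁ : N := (b 0 : N) with hc1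
    set c₂ : N := (b 1 : N) with hc2
    have hindep : ∀ a d : ℂ, a • c₁ + d • c₂ = 0 → a = 0 ∧ d = 0 := by
      intro a d h
      have hz : a • (b 0) + d • (b 1) = (0 : Csp) := by
        apply Subtype.ext
        simpa using h
      have hli := b.linearIndependent
      rw [Fintype.linearIndependent_iff] at hli
      have := hli ![a, d] (by simpa [Fin.sum_univ_two] using hz)
      exact ⟨this 0, this 1⟩
    have hrep : ∀ v ∈ Csp, ∃ s t : ℂ, v = s • c₁ + t • c₂ := by
      intro v hv
      have hs := b.sum_repr ⟨v, hv⟩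
      refine ⟨b.repr ⟨v, hv⟩ 0, b.repr ⟨v, hv⟩ 1, ?_⟩
      have h2 := congrArg (Submodule.subtype Csp) hs
      simp only [map_sum, map_smul, Fin.sum_univ_two] at h2
      exact h2.symm
    obtain ⟨u₁, hu11, hu12⟩ := aux_dual B hBnondeg c₁ c₂ hindep
    obtain ⟨u₂, hu22, hu21⟩ := aux_dual B hBnondeg c₂ c₁
      (fun a d h => ((hindep d a (by rw [← h]; abel)).symm.imp id id))
    have hdec : ∀ x y : N, β (x - (B c₁ x) • u₁ - (B c₂ x) • u₂) y = 0 := by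
      intro x
      apply hcent
      intro v hv
      obtain ⟨s, t, rfl⟩ := hrep v hv
      rw [hBsymm]
      simp only [map_add, map_smul, map_sub, LinearMap.smul_apply, LinearMap.sub_apply,
        LinearMap.add_apply, smul_eq_mul]
      rw [hu11, hu12, hu21, hu22, hBsymm c₁ x, hBsymm c₂ x]
      ring
    set w₀ : N := β u₁ u₂ with hw0
    have hall : ∀ x y : N, β x y ∈ (ℂ ∙ w₀) := by
      intro x y
      set a : ℂ := B c₁ x with ha
      set bb : ℂ := B c₂ x with hbb
      set cc : ℂ := B c₁ y with hcc
      set d : ℂ := B c₂ y with hd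
      set x₀ : N := x - a • u₁ - bb • u₂ with hx0
      set y₀ : N := y - cc • u₁ - d • u₂ with hy0
      have hx : x = x₀ + a • u₁ + bb • u₂ := by rw [hx0]; abel
      have hy : y = y₀ + cc • u₁ + d • u₂ := by rw [hy0]; abel
      have e1 : ∀ w : N, β x₀ w = 0 := hdec x
      have e2 : ∀ w : N, β y₀ w = 0 := hdec y
      have hb1 : β u₁ y = d • w₀ := by
        rw [hy, map_add, map_add, map_smul, map_smul]
        have h1 : β u₁ y₀ = 0 := by rw [hskew y₀ u₁, e2, neg_zero]
        rw [h1, halt, smul_zero, hw0]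
        abel
      have hb2 : β u₂ y = -(cc • w₀) := by
        rw [hy, map_add, map_add, map_smul, map_smul]
        have h1 : β u₂ y₀ = 0 := by rw [hskew y₀ u₂, e2, neg_zero]
        have h2 : β u₂ u₁ = -w₀ := by rw [hskew u₁ u₂, hw0]
        rw [h1, halt, smul_zero, h2, smul_neg, hw0]
        abel
      have hfin : β x y = (a * d - bb * cc) • w₀ := by
        rw [hx]
        simp only [map_add, map_smul, LinearMap.add_apply, LinearMap.smul_apply]
        rw [e1 y, hb1, hb2, smul_smul, smul_neg, smul_smul, sub_smul, mul_comm bb cc]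
        abel
      rw [hfin]
      exact Submodule.smul_mem _ _ (Submodule.mem_span_singleton_self w₀)
    have hCle : Csp ≤ (ℂ ∙ w₀) := by
      rw [hCsp, Submodule.span_le]
      rintro v ⟨x, y, rfl⟩
      exact hall x y
    have h1 : Module.finrank ℂ Csp ≤ Module.finrank ℂ (ℂ ∙ w₀) :=
      Submodule.finrank_mono hCle
    have h2 : Module.finrank ℂ (ℂ ∙ w₀) ≤ 1 := by
      by_cases hw : w₀ = 0
      · rw [hw, Submodule.span_zero_singleton]
        simp
      · rw [finrank_span_singleton hw]
    omega

end Aux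

set_option maxHeartbeats 1000000 in
/-- For a reduced symmetric non-commutative Novikov algebra N,
3 ≤ dim Ann(N) ≤ dim(N·N) ≤ dim N − 3. -/
theorem stmt18
    {N : Type*} [AddCommGroup N] [Module ℂ N] [FiniteDimensional ℂ N] [Nontrivial N]
    (mul : N →ₗ[ℂ] N →ₗ[ℂ] N)
    (hlsym : ∀ x y z : N,
      mul (mul x y) z - mul x (mul y z) = mul (mul y x) z - mul y (mul x z))
    (hrcomm : ∀ x y z : N, mul (mul x y) z = mul (mul x z) y)
    (B : N →ₗ[ℂ] N →ₗ[ℂ] ℂ)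
    (hBsymm : ∀ x y : N, B x y = B y x)
    (hBnondeg : ∀ x : N, (∀ y : N, B x y = 0) → x = 0)
    (hBassoc : ∀ x y z : N, B (mul x y) z = B x (mul y z))
    (hnoncomm : ∃ x y : N, mul x y ≠ mul y x)
    (Ann : Submodule ℂ N)
    (hAnn : ∀ x : N, x ∈ Ann ↔ ∀ y : N, mul x y = 0 ∧ mul y x = 0)
    (hred : ∀ x ∈ Ann, x ∈ Submodule.span ℂ {a : N | ∃ y z : N, mul y z = a}) :
    3 ≤ Module.finrank ℂ Ann ∧
    Module.finrank ℂ Ann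
      ≤ Module.finrank ℂ (Submodule.span ℂ {a : N | ∃ y z : N, mul y z = a}) ∧
    Module.finrank ℂ (Submodule.span ℂ {a : N | ∃ y z : N, mul y z = a})
      ≤ Module.finrank ℂ N - 3 := by
  classical
  set N2 : Submodule ℂ N := Submodule.span ℂ {a : N | ∃ y z : N, mul y z = a} with hN2
  -- the commutator bilinear map
  set β : N →ₗ[ℂ] N →ₗ[ℂ] N := mul - mul.flip with hβdef
  have hβ : ∀ x y : N, β x y = mul x y - mul y x := by
    intro x y
    simp [hβdef, LinearMap.sub_apply, LinearMap.flip_apply]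
  -- left multiplications commute
  have hL : ∀ x y z : N, mul x (mul y z) = mul y (mul x z) := by
    intro x y z
    rw [← sub_eq_zero]
    apply hBnondeg
    intro u
    rw [hBsymm, map_sub]
    have h1 : B u (mul x (mul y z)) = B (mul (mul u x) y) z := by
      rw [hBassoc, hBassoc]
    have h2 : B u (mul y (mul x z)) = B (mul (mul u y) x) z := by
      rw [hBassoc, hBassoc]
    rw [h1, h2, hrcomm u x y]
    ring
  -- commutators left-annihilate
  have hLz : ∀ x y z : N, mul (β x y) z = 0 := by
    intro x y z
    have h1 := hlsym x y z
    have h2 := hL x y z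
    rw [hβ, map_sub, LinearMap.sub_apply, sub_eq_zero]
    have h3 : mul (mul x y) z - mul x (mul y z) = mul (mul y x) z - mul x (mul y z) := by
      rw [h1, h2]
    exact sub_left_inj.mp h3
  -- commutators right-annihilate
  have hRz : ∀ x y z : N, mul z (β x y) = 0 := by
    intro x y z
    apply hBnondeg
    intro u
    rw [hBassoc, hLz, map_zero]
  -- commutators are in Ann
  have hC_in_Ann : ∀ x y : N, β x y ∈ Ann := by
    intro x y
    rw [hAnn]
    intro z
    exact ⟨hLz x y z, hRz x y z⟩
  -- the commutator span
  set C : Submodule ℂ N := Submodule.span ℂ {a : N | ∃ x y : N, β x y = a} with hC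
  have hCAnn : C ≤ Ann := by
    rw [hC, Submodule.span_le]
    rintro a ⟨x, y, rfl⟩
    exact hC_in_Ann x y
  -- invariance: B(β x y, z) = B(x, β y z)
  have hinv : ∀ x y z : N, B (β x y) z = B x (β y z) := by
    intro x y z
    have h1 : B (mul x y) z = B x (mul y z) := hBassoc x y z
    have h2 : B (mul y x) z = B y (mul x z) := hBassoc y x z
    have h3 : B (mul x z) y = B x (mul z y) := hBassoc x z y
    rw [hβ, hβ]
    simp only [map_sub, LinearMap.sub_apply]
    rw [h1, h2, ← h3, hBsymm y (mul x z)]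
  -- β is alternating
  have halt : ∀ x : N, β x x = 0 := by
    intro x
    rw [hβ, sub_self]
  -- β is not identically zero
  have hne : ∃ x y : N, β x y ≠ 0 := by
    obtain ⟨x, y, hxy⟩ := hnoncomm
    exact ⟨x, y, by rw [hβ]; exact sub_ne_zero.mpr hxy⟩
  -- main dimension bound
  have hmain : 3 ≤ Module.finrank ℂ C :=
    aux_rank3 β B hBsymm hBnondeg halt hinv hne
  -- Ann is the orthogonal complement of N2
  have hOrth : Ann = LinearMap.BilinForm.orthogonal B N2 := by
    apply le_antisymm
    · intro x hx
      rw [LinearMap.BilinForm.mem_orthogonal_iff]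
      intro n hn
      have hker : N2 ≤ LinearMap.ker (B.flip x) := by
        rw [hN2, Submodule.span_le]
        rintro a ⟨y, z, rfl⟩
        have hz : mul z x = 0 := ((hAnn x).mp hx z).2
        simp only [SetLike.mem_coe, LinearMap.mem_ker, LinearMap.flip_apply]
        rw [hBassoc, hz, map_zero]
      have := hker hn
      simpa [LinearMap.BilinForm.IsOrtho] using this
    · intro x hx
      rw [LinearMap.BilinForm.mem_orthogonal_iff] at hx
      rw [hAnn]
      intro y
      have h1 : mul x y = 0 := by
        apply hBnondeg
        intro u
        rw [hBassoc, hBsymm]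
        exact hx (mul y u) (Submodule.subset_span ⟨y, u, rfl⟩)
      refine ⟨h1, ?_⟩
      apply hBnondeg
      intro u
      rw [hBassoc, hBsymm]
      have h2 : mul x u = 0 := by
        apply hBnondeg
        intro w
        rw [hBassoc, hBsymm]
        exact hx (mul u w) (Submodule.subset_span ⟨u, w, rfl⟩)
      rw [h2]
      simp
  have hrefl : LinearMap.BilinForm.IsRefl B := fun x y h => by rw [hBsymm] at h; exact h
  have hnd : LinearMap.BilinForm.Nondegenerate B :=
    ⟨hBnondeg, fun y h => hBnondeg y (fun x => by rw [hBsymm]; exact h x)⟩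
  have hrank : Module.finrank ℂ Ann = Module.finrank ℂ N - Module.finrank ℂ N2 := by
    rw [hOrth]
    exact LinearMap.BilinForm.finrank_orthogonal hnd N2
  have hAnnN2 : Module.finrank ℂ Ann ≤ Module.finrank ℂ N2 :=
    Submodule.finrank_mono (fun x hx => hred x hx)
  have hAnnC : 3 ≤ Module.finrank ℂ Ann :=
    le_trans hmain (Submodule.finrank_mono hCAnn)
  have hN2le : Module.finrank ℂ N2 ≤ Module.finrank ℂ N := Submodule.finrank_le N2
  exact ⟨hAnnC, hAnnN2, by omega⟩
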